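/- Suppose F : [0,∞) → Matrix (Fin n) (Fin n) ℂ is differentiable on (0,∞) with F(x) → 0 as x → ∞, ∫₀^∞(1+x)‖F'(x)‖dx < ∞, and F(x)† = F(x) for all x ≥ 0, and suppose for each x ≥ 0 the homogeneous equation h(t) + ∫ₓ^∞h(s)F(s+t)ds = 0 has only the zero solution in L¹((x,∞); ℂⁿ). Let K(x,·) ∈ L¹((x,∞); Matrix (Fin n) (Fin n) ℂ) be the unique solution of the Marchenko equation F(x+y) + K(x,y) + ∫ₓ^∞K(x,t)F(t+y)dt = 0 (y ≥ x), and suppose x ↦ K(x,x) is differentiable. Then the reconstructed potential V(x) := -2·(d/dx)K(x,x) is self-adjoint: V(x)† = V(x) for a.e. x ≥ 0. -/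

import Mathlib

open MeasureTheory Matrix Filter Topology Complex

attribute [local instance] Matrix.linftyOpNormedAddCommGroup Matrix.linftyOpNormedSpace
  Matrix.linftyOpNormedRing Matrix.linftyOpNormedAlgebra

set_option maxHeartbeats 1000000

@[reducible] noncomputable def matTop (n : ℕ) : TopologicalSpace (Matrix (Fin n) (Fin n) ℂ) :=
  (SeminormedAddGroup.toPseudoMetricSpace (E := Matrix (Fin n) (Fin n) ℂ)).toUniformSpace.toTopologicalSpace

section

attribute [local instance 2000] matTop

noncomputable def ctL (n : ℕ) : Matrix (Fin n) (Fin n) ℂ →L[ℝ] Matrix (Fin n) (Fin n) ℂ :=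
  haveI : FiniteDimensional ℝ (Matrix (Fin n) (Fin n) ℂ) := by
    have : FiniteDimensional ℂ (Matrix (Fin n) (Fin n) ℂ) := by infer_instance
    exact Module.Finite.trans ℂ _
  LinearMap.toContinuousLinearMap
    { toFun := fun M => Mᴴ
      map_add' := fun A B => Matrix.conjTranspose_add A B
      map_smul' := fun r M => by simp [Matrix.conjTranspose_smul] }

@[simp] lemma ctL_apply (n : ℕ) (M : Matrix (Fin n) (Fin n) ℂ) : ctL n M = Mᴴ := rfl

lemma abc_aux {M : Type*} [AddCommGroup M] (a b c : M) (h : a + b + c = 0) :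
    b = -a - c := by
  have h' : b + c + a = 0 := by rw [← h]; abel
  have h2 : b + c = -a := eq_neg_of_add_eq_zero_left h'
  rw [eq_sub_iff_add_eq, h2]

lemma herm_diag (n : ℕ)
    (F : ℝ → Matrix (Fin n) (Fin n) ℂ)
    (hFdiff : ∀ x ∈ Set.Ioi (0 : ℝ), DifferentiableAt ℝ F x)
    (hFlim : Tendsto F atTop (𝓝 0))
    (hFherm : ∀ x : ℝ, 0 ≤ x → (F x)ᴴ = F x)
    (K : ℝ → ℝ → Matrix (Fin n) (Fin n) ℂ)
    (hKint : ∀ x : ℝ, 0 ≤ x → IntegrableOn (K x) (Set.Ioi x))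
    (hKeq : ∀ x : ℝ, 0 ≤ x → ∀ y : ℝ, x ≤ y →
      F (x + y) + K x y + ∫ t in Set.Ioi x, K x t * F (t + y) = 0)
    (z : ℝ) (hz : 0 < z) : (K z z)ᴴ = K z z := by
  classical
  set I : Set ℝ := Set.Ioi z with hI
  set μ : Measure ℝ := volume.restrict I with hμ
  have hzle : (0:ℝ) ≤ z := hz.le
  -- continuity of F on [z, ∞)
  have hFcont : ContinuousOn F (Set.Ici z) := fun u hu =>
    ((hFdiff u (lt_of_lt_of_le hz hu)).continuousAt).continuousWithinAt
  -- bound for F on [z, ∞)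
  obtain ⟨M, hM0, hM⟩ : ∃ M : ℝ, 0 ≤ M ∧ ∀ u, z ≤ u → ‖F u‖ ≤ M := by
    have h1 : ∀ᶠ u in atTop, ‖F u‖ < 1 := by
      have := hFlim.norm
      simp only [norm_zero] at this
      exact this.eventually_lt_const one_pos
    obtain ⟨N, hN⟩ := eventually_atTop.mp h1
    obtain ⟨C, hC⟩ := (isCompact_Icc (a := z) (b := max z N)).exists_bound_of_continuousOn
      (hFcont.mono (fun u hu => hu.1))
    refine ⟨max C 1, le_trans zero_le_one (le_max_right _ _), fun u hu => ?_⟩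
    by_cases h : u ≤ max z N
    · exact le_trans (hC u ⟨hu, h⟩) (le_max_left _ _)
    · exact le_trans (hN u (le_trans (le_max_right z N) (not_le.mp h).le)).le (le_max_right _ _)
  have hKI : IntegrableOn (K z) I := hKint z hzle
  have hKae : AEStronglyMeasurable (K z) μ := hKI.aestronglyMeasurable
  have hKH : Integrable (fun t => (K z t)ᴴ) μ := by
    simpa using (ctL n).integrable_comp hKI
  -- F composed: measurability
  have hFmeas : ∀ y : ℝ, z ≤ y → AEStronglyMeasurable (fun t => F (t + y)) μ := by
    intro y hy
    have hc : ContinuousOn (fun t => F (t + y)) I := by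
      apply hFcont.comp (by fun_prop)
      intro t ht
      have : z < t := ht
      simp only [Set.mem_Ici]
      linarith
    exact hc.aestronglyMeasurable measurableSet_Ioi
  -- integrability of K * F(·+y)
  have hKF : ∀ y : ℝ, z ≤ y → Integrable (fun t => K z t * F (t + y)) μ := by
    intro y hy
    refine Integrable.mono' (hKI.norm.mul_const M) (hKae.mul (hFmeas y hy)) ?_
    filter_upwards [self_mem_ae_restrict (measurableSet_Ioi : MeasurableSet I)] with t ht
    calc ‖K z t * F (t + y)‖ ≤ ‖K z t‖ * ‖F (t + y)‖ := norm_mul_le _ _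
      _ ≤ ‖K z t‖ * M := by
          refine mul_le_mul_of_nonneg_left (hM _ ?_) (norm_nonneg _)
          have : z < t := ht
          linarith
  -- integrability of F(·+y) * Kᴴ
  have hFKH : ∀ y : ℝ, z ≤ y → Integrable (fun t => F (t + y) * (K z t)ᴴ) μ := by
    intro y hy
    refine Integrable.mono' (hKH.norm.const_mul M) ((hFmeas y hy).mul hKH.aestronglyMeasurable) ?_
    filter_upwards [self_mem_ae_restrict (measurableSet_Ioi : MeasurableSet I)] with t ht
    calc ‖F (t + y) * (K z t)ᴴ‖ ≤ ‖F (t + y)‖ * ‖(K z t)ᴴ‖ := norm_mul_le _ _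
      _ ≤ M * ‖(K z t)ᴴ‖ := by
          refine mul_le_mul_of_nonneg_right (hM _ ?_) (norm_nonneg _)
          have : z < t := ht
          linarith
  classical
  -- the function W
  set W : ℝ → Matrix (Fin n) (Fin n) ℂ := fun t => ∫ s in I, K z s * F (s + t) with hWdef
  have hWeq : ∀ t, z ≤ t → F (z + t) = -K z t - W t := by
    intro t ht
    have h := hKeq z hzle t ht
    have h' : K z t + F (z + t) + (∫ s in Set.Ioi z, K z s * F (s + t)) = 0 := by
      rw [← h]; abel
    exact abc_aux _ _ _ h'
  set B : ℝ := (∫ t in I, ‖K z t‖) * M with hB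
  have hWb : ∀ t, z ≤ t → ‖W t‖ ≤ B := by
    intro t ht
    calc ‖W t‖ ≤ ∫ s in I, ‖K z s * F (s + t)‖ := norm_integral_le_integral_norm _
      _ ≤ ∫ s in I, ‖K z s‖ * M := by
          refine integral_mono_of_nonneg (Filter.Eventually.of_forall fun s => norm_nonneg _)
            (hKI.norm.mul_const M) ?_
          filter_upwards [self_mem_ae_restrict (measurableSet_Ioi : MeasurableSet I)] with s hs
          calc ‖K z s * F (s + t)‖ ≤ ‖K z s‖ * ‖F (s + t)‖ := norm_mul_le _ _
            _ ≤ ‖K z s‖ * M := by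
                refine mul_le_mul_of_nonneg_left (hM _ ?_) (norm_nonneg _)
                have : z < s := hs
                linarith
      _ = B := by rw [hB, ← integral_mul_const]
  have hWm : AEStronglyMeasurable W (volume.restrict I) := by
    have hW2 : ∀ t ∈ I, W t = -F (t + z) - K z t := by
      intro t ht
      have h1 := hWeq t (le_of_lt ht)
      rw [add_comm] at h1
      rw [h1]; abel
    have hm2 : AEStronglyMeasurable (fun t => -F (t + z) - K z t) (volume.restrict I) :=
      ((hFmeas z le_rfl).neg).sub hKae
    refine hm2.congr ?_
    filter_upwards [self_mem_ae_restrict (measurableSet_Ioi : MeasurableSet I)] with t ht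
    exact (hW2 t ht).symm
  have hWKH : Integrable (fun t => W t * (K z t)ᴴ) (volume.restrict I) := by
    refine Integrable.mono' (hKH.norm.const_mul B) (hWm.mul hKH.aestronglyMeasurable) ?_
    filter_upwards [self_mem_ae_restrict (measurableSet_Ioi : MeasurableSet I)] with t ht
    calc ‖W t * (K z t)ᴴ‖ ≤ ‖W t‖ * ‖(K z t)ᴴ‖ := norm_mul_le _ _
      _ ≤ B * ‖(K z t)ᴴ‖ := mul_le_mul_of_nonneg_right (hWb t (le_of_lt ht)) (norm_nonneg _)
  have hKWH : Integrable (fun t => K z t * (W t)ᴴ) (volume.restrict I) := by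
    have hWHm : AEStronglyMeasurable (fun t => (W t)ᴴ) (volume.restrict I) := by
      have := (ctL n).continuous.comp_aestronglyMeasurable hWm
      simpa using this
    refine Integrable.mono' (hKI.norm.mul_const (‖ctL n‖ * B)) (hKae.mul hWHm) ?_
    filter_upwards [self_mem_ae_restrict (measurableSet_Ioi : MeasurableSet I)] with t ht
    calc ‖K z t * (W t)ᴴ‖ ≤ ‖K z t‖ * ‖(W t)ᴴ‖ := norm_mul_le _ _
      _ ≤ ‖K z t‖ * (‖ctL n‖ * B) := by
          refine mul_le_mul_of_nonneg_left ?_ (norm_nonneg _)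
          calc ‖(W t)ᴴ‖ = ‖ctL n (W t)‖ := by rw [ctL_apply]
            _ ≤ ‖ctL n‖ * ‖W t‖ := (ctL n).le_opNorm _
            _ ≤ ‖ctL n‖ * B := mul_le_mul_of_nonneg_left (hWb t (le_of_lt ht)) (norm_nonneg _)
  -- product integrability
  have hGint : Integrable (fun p : ℝ × ℝ => K z p.1 * F (p.2 + p.1) * (K z p.2)ᴴ)
      ((volume.restrict I).prod (volume.restrict I)) := by
    have hFprod : AEStronglyMeasurable (fun p : ℝ × ℝ => F (p.2 + p.1))
        ((volume.restrict I).prod (volume.restrict I)) := by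
      have hrw : (volume.restrict I).prod (volume.restrict I)
          = (volume.prod volume).restrict (I ×ˢ I) := Measure.prod_restrict I I
      rw [hrw]
      have hc : ContinuousOn (fun p : ℝ × ℝ => F (p.2 + p.1)) (I ×ˢ I) := by
        apply hFcont.comp (by fun_prop)
        rintro ⟨a, b⟩ ⟨ha, hb⟩
        have ha' : z < a := ha
        have hb' : z < b := hb
        simp only [Set.mem_Ici]
        linarith
      exact hc.aestronglyMeasurable (measurableSet_Ioi.prod measurableSet_Ioi)
    have hmeas : AEStronglyMeasurable (fun p : ℝ × ℝ => K z p.1 * F (p.2 + p.1) * (K z p.2)ᴴ)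
        ((volume.restrict I).prod (volume.restrict I)) := by
      have hA : AEStronglyMeasurable (fun p : ℝ × ℝ => K z p.1)
          ((volume.restrict I).prod (volume.restrict I)) := hKae.comp_fst
      have hC : AEStronglyMeasurable (fun p : ℝ × ℝ => (K z p.2)ᴴ)
          ((volume.restrict I).prod (volume.restrict I)) := hKH.aestronglyMeasurable.comp_snd
      exact (hA.mul hFprod).mul hC
    refine Integrable.mono' ((hKI.norm.mul_const M).mul_prod hKH.norm) hmeas ?_
    have hsub : (I ×ˢ I : Set (ℝ × ℝ)) ∈ ae ((volume.restrict I).prod (volume.restrict I)) := by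
      rw [Measure.prod_restrict]
      exact self_mem_ae_restrict (measurableSet_Ioi.prod measurableSet_Ioi)
    filter_upwards [hsub] with p hp
    obtain ⟨hp1, hp2⟩ := hp
    have h1 : z < p.1 := hp1
    have h2 : z < p.2 := hp2
    calc ‖K z p.1 * F (p.2 + p.1) * (K z p.2)ᴴ‖
        ≤ ‖K z p.1 * F (p.2 + p.1)‖ * ‖(K z p.2)ᴴ‖ := norm_mul_le _ _
      _ ≤ (‖K z p.1‖ * M) * ‖(K z p.2)ᴴ‖ := by
          refine mul_le_mul_of_nonneg_right ?_ (norm_nonneg _)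
          calc ‖K z p.1 * F (p.2 + p.1)‖ ≤ ‖K z p.1‖ * ‖F (p.2 + p.1)‖ := norm_mul_le _ _
            _ ≤ ‖K z p.1‖ * M :=
                mul_le_mul_of_nonneg_left (hM _ (by linarith)) (norm_nonneg _)
  -- Fubini swap
  have key : (∫ t in I, ∫ s in I, K z t * F (s + t) * (K z s)ᴴ)
      = ∫ t in I, ∫ s in I, K z s * F (s + t) * (K z t)ᴴ := by
    have hswap := integral_integral_swap (μ := volume.restrict I) (ν := volume.restrict I)
      (f := fun t s => K z t * F (s + t) * (K z s)ᴴ) hGint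
    rw [hswap]
    refine integral_congr_ae (Filter.Eventually.of_forall fun t => ?_)
    refine integral_congr_ae (Filter.Eventually.of_forall fun s => ?_)
    show K z s * F (t + s) * (K z t)ᴴ = K z s * F (s + t) * (K z t)ᴴ
    rw [add_comm t s]
  -- pull constants in/out of inner integrals
  have stepP : (∫ t in I, W t * (K z t)ᴴ)
      = ∫ t in I, ∫ s in I, K z s * F (s + t) * (K z t)ᴴ := by
    refine setIntegral_congr_fun (measurableSet_Ioi : MeasurableSet I) (fun t ht => ?_)
    have h := (((ContinuousLinearMap.mul ℂ (Matrix (Fin n) (Fin n) ℂ)).flip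
      ((K z t)ᴴ)).integral_comp_comm (hKF t (le_of_lt ht)))
    simp only [ContinuousLinearMap.flip_apply, ContinuousLinearMap.mul_apply'] at h
    exact h.symm
  have stepQ : (∫ t in I, K z t * (W t)ᴴ)
      = ∫ t in I, ∫ s in I, K z t * F (s + t) * (K z s)ᴴ := by
    refine setIntegral_congr_fun (measurableSet_Ioi : MeasurableSet I) (fun t ht => ?_)
    have ht' : z < t := ht
    have hWH : (W t)ᴴ = ∫ s in I, F (s + t) * (K z s)ᴴ := by
      have h := (ctL n).integral_comp_comm (hKF t (le_of_lt ht))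
      simp only [ctL_apply] at h
      rw [← h]
      refine setIntegral_congr_fun (measurableSet_Ioi : MeasurableSet I) (fun s hs => ?_)
      have hs' : z < s := hs
      rw [Matrix.conjTranspose_mul, hFherm (s + t) (by linarith)]
    rw [hWH]
    have h2 := ((ContinuousLinearMap.mul ℂ (Matrix (Fin n) (Fin n) ℂ))
      (K z t)).integral_comp_comm (hFKH t (le_of_lt ht))
    simp only [ContinuousLinearMap.mul_apply'] at h2
    rw [← h2]
    refine setIntegral_congr_fun (measurableSet_Ioi : MeasurableSet I) (fun s hs => ?_)
    rw [mul_assoc]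
  -- conjugate transpose of T
  set T : Matrix (Fin n) (Fin n) ℂ := ∫ t in I, K z t * F (t + z) with hT
  have hTH : Tᴴ = ∫ t in I, F (t + z) * (K z t)ᴴ := by
    have h := (ctL n).integral_comp_comm (hKF z le_rfl)
    simp only [ctL_apply] at h
    rw [hT, ← h]
    refine setIntegral_congr_fun (measurableSet_Ioi : MeasurableSet I) (fun t ht => ?_)
    have ht' : z < t := ht
    rw [Matrix.conjTranspose_mul, hFherm (t + z) (by linarith)]
  have hTsub : T - Tᴴ = 0 := by
    rw [hTH, hT, ← integral_sub (hKF z le_rfl) (hFKH z le_rfl)]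
    have hsplit : (∫ t in I, (K z t * F (t + z) - F (t + z) * (K z t)ᴴ))
        = ∫ t in I, (W t * (K z t)ᴴ - K z t * (W t)ᴴ) := by
      refine setIntegral_congr_fun (measurableSet_Ioi : MeasurableSet I) (fun t ht => ?_)
      have ht' : z < t := ht
      have hF1 : F (t + z) = -K z t - W t := by
        rw [add_comm]; exact hWeq t (le_of_lt ht')
      have hF2 : F (t + z) = (-K z t - W t)ᴴ := by
        rw [← hFherm (t + z) (by linarith), hF1]
      calc K z t * F (t + z) - F (t + z) * (K z t)ᴴ
          = K z t * (-K z t - W t)ᴴ - (-K z t - W t) * (K z t)ᴴ := by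
            rw [← hF2, ← hF1]
        _ = W t * (K z t)ᴴ - K z t * (W t)ᴴ := by
            rw [Matrix.conjTranspose_sub, Matrix.conjTranspose_neg]
            noncomm_ring
    rw [hsplit, integral_sub hWKH hKWH, stepP, stepQ, ← key, sub_self]
  have hTT : Tᴴ = T := by
    have := sub_eq_zero.mp hTsub
    exact this.symm
  -- final assembly
  have h := hKeq z hzle z le_rfl
  have hKzz : K z z = -F (z + z) - T := abc_aux _ _ _ h
  rw [hKzz, Matrix.conjTranspose_sub, Matrix.conjTranspose_neg, hFherm (z + z) (by linarith), hTT]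

end

/-- **Self-adjointness part of Theorem 5.2**: if the Hermitian matrix function `F` satisfies
the regularity and decay conditions (II), the associated homogeneous Marchenko equation has
only the zero solution in `L¹`, and `K(x,·)` is the (unique) `L¹` solution of the Marchenko
equation with `x ↦ K(x,x)` differentiable, then the reconstructed potential
`V(x) = -2 (d/dx) K(x,x)` is self-adjoint a.e. -/
theorem reconstructed_potential_selfadjoint (n : ℕ) (hn : 1 ≤ n)
    (F : ℝ → Matrix (Fin n) (Fin n) ℂ)
    (hFdiff : ∀ x ∈ Set.Ioi (0 : ℝ), DifferentiableAt ℝ F x)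
    (hFlim : Tendsto F atTop (𝓝 0))
    (hF'int : IntegrableOn (fun x => (1 + x) * ‖deriv F x‖) (Set.Ioi 0))
    (hFherm : ∀ x : ℝ, 0 ≤ x → (F x)ᴴ = F x)
    (huniq : ∀ x : ℝ, 0 ≤ x → ∀ h : ℝ → Fin n → ℂ, IntegrableOn h (Set.Ioi x) →
      (∀ᵐ t ∂(volume.restrict (Set.Ioi x)),
        h t + ∫ s in Set.Ioi x, Matrix.vecMul (h s) (F (s + t)) = 0) →
      (∀ᵐ t ∂(volume.restrict (Set.Ioi x)), h t = 0))
    (K : ℝ → ℝ → Matrix (Fin n) (Fin n) ℂ)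
    (hKint : ∀ x : ℝ, 0 ≤ x →
      @IntegrableOn _ _ _ _ SeminormedAddGroup.toContinuousENorm (K x) (Set.Ioi x) volume)
    (hKeq : ∀ x : ℝ, 0 ≤ x → ∀ y : ℝ, x ≤ y →
      F (x + y) + K x y + ∫ t in Set.Ioi x, K x t * F (t + y) = 0)
    (hKdiff : ∀ x : ℝ, 0 ≤ x → DifferentiableAt ℝ (fun y => K y y) x) :
    ∀ᵐ x ∂(volume.restrict (Set.Ioi 0)),
      ((-2 : ℂ) • deriv (fun y => K y y) x)ᴴ = (-2 : ℂ) • deriv (fun y => K y y) x := by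
  filter_upwards [self_mem_ae_restrict (measurableSet_Ioi : MeasurableSet (Set.Ioi (0:ℝ)))]
    with x hx
  have hx0 : 0 < x := hx
  have hd : HasDerivAt (fun y => K y y) (deriv (fun y => K y y) x) x :=
    (hKdiff x hx0.le).hasDerivAt
  have hL : HasDerivAt (fun y => ctL n (K y y)) (ctL n (deriv (fun y => K y y) x)) x :=
    (ctL n).hasFDerivAt.comp_hasDerivAt x hd
  have heq : (fun y => ctL n (K y y)) =ᶠ[𝓝 x] (fun y => K y y) := by
    filter_upwards [isOpen_Ioi.mem_nhds hx] with y hy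
    simp only [ctL_apply]
    exact herm_diag n F hFdiff hFlim hFherm K hKint hKeq y hy
  have hd2 : HasDerivAt (fun y => K y y) (ctL n (deriv (fun y => K y y) x)) x :=
    hL.congr_of_eventuallyEq heq.symm
  have hdd : (deriv (fun y => K y y) x)ᴴ = deriv (fun y => K y y) x := by
    have h := hd2.unique hd
    simpa using h
  rw [Matrix.conjTranspose_smul, hdd]
  congr 1
  simp
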